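/- Let S ⪰ 0, λ > 0, and Ŝ symmetric with ‖(S+λI)^{-1/2}(Ŝ−S)(S+λI)^{-1/2}‖ ≤ 1/2. Then |tr(S(Ŝ+λI)^{-1}) − df_λ(S)| ≤ 3·df_λ(S), i.e., the degrees-of-freedom surrogate computed with Ŝ is at most 4·df_λ(S). -/

import Mathlib

open Matrix
open scoped Matrix.Norms.L2Operator

/-- The positive semidefinite square root of a matrix (junk value `0` if the
matrix is not positive semidefinite). -/
noncomputable def msqrt {d : ℕ} (M : Matrix (Fin d) (Fin d) ℝ) :
    Matrix (Fin d) (Fin d) ℝ := by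
  classical exact if h : M.PosSemidef then
    h.1.eigenvectorUnitary.1 * diagonal ((↑) ∘ (√·) ∘ h.1.eigenvalues) *
      (star h.1.eigenvectorUnitary : Matrix (Fin d) (Fin d) ℝ) else 0

/-- The inverse square root `M^{-1/2}` of a positive semidefinite matrix. -/
noncomputable def minvSqrt {d : ℕ} (M : Matrix (Fin d) (Fin d) ℝ) :
    Matrix (Fin d) (Fin d) ℝ :=
  (msqrt M)⁻¹

/-- Loewner order: `A ⪯ B` iff `B - A` is positive semidefinite. -/
def Loewner {d : ℕ} (A B : Matrix (Fin d) (Fin d) ℝ) : Prop :=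
  (B - A).PosSemidef

/-- Degrees of freedom: `df_λ(S) = tr(S (S + λI)⁻¹)`. -/
noncomputable def df {d : ℕ} (S : Matrix (Fin d) (Fin d) ℝ) (l : ℝ) : ℝ :=
  (S * (S + l • (1 : Matrix (Fin d) (Fin d) ℝ))⁻¹).trace

section Aux

lemma msqrt_spec {d : ℕ} {M : Matrix (Fin d) (Fin d) ℝ} (h : M.PosSemidef) :
    msqrt M = h.1.eigenvectorUnitary.1 * diagonal ((↑) ∘ (√·) ∘ h.1.eigenvalues) *
      (star h.1.eigenvectorUnitary : Matrix (Fin d) (Fin d) ℝ) := by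
  rw [msqrt, dif_pos h]

lemma msqrt_posSemidef {d : ℕ} {M : Matrix (Fin d) (Fin d) ℝ} (h : M.PosSemidef) :
    (msqrt M).PosSemidef := by
  rw [msqrt_spec h, star_eq_conjTranspose]
  refine (PosSemidef.diagonal ?_).mul_mul_conjTranspose_same _
  intro i
  simp [Real.sqrt_nonneg]

lemma msqrt_mul_self {d : ℕ} {M : Matrix (Fin d) (Fin d) ℝ} (h : M.PosSemidef) :
    msqrt M * msqrt M = M := by
  rw [msqrt_spec h]
  conv_rhs => rw [h.1.spectral_theorem, Unitary.conjStarAlgAut_apply]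
  have hU : (star h.1.eigenvectorUnitary : Matrix (Fin d) (Fin d) ℝ) *
      h.1.eigenvectorUnitary.1 = 1 := Unitary.coe_star_mul_self _
  have hD : diagonal (((↑) ∘ (√·) ∘ h.1.eigenvalues) : Fin d → ℝ) *
      diagonal ((↑) ∘ (√·) ∘ h.1.eigenvalues) = diagonal (RCLike.ofReal ∘ h.1.eigenvalues) := by
    rw [diagonal_mul_diagonal]
    congr 1
    funext i
    simp [Real.mul_self_sqrt (h.eigenvalues_nonneg i)]
  calc _ = h.1.eigenvectorUnitary.1 * diagonal (((↑) ∘ (√·) ∘ h.1.eigenvalues) : Fin d → ℝ) *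
        ((star h.1.eigenvectorUnitary : Matrix (Fin d) (Fin d) ℝ) * h.1.eigenvectorUnitary.1) *
        diagonal ((↑) ∘ (√·) ∘ h.1.eigenvalues) *
        (star h.1.eigenvectorUnitary : Matrix (Fin d) (Fin d) ℝ) := by
          simp only [Matrix.mul_assoc]
    _ = _ := by rw [hU, Matrix.mul_one, Matrix.mul_assoc _ (diagonal _) (diagonal _), hD]

lemma posSemidef_iff_eq_transpose_mul_self' {d : ℕ} {T : Matrix (Fin d) (Fin d) ℝ} :
    T.PosSemidef → ∃ C : Matrix (Fin d) (Fin d) ℝ, T = Cᴴ * C := fun h =>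
  ⟨msqrt T, by rw [(msqrt_posSemidef h).1.eq, msqrt_mul_self h]⟩

open scoped InnerProductSpace

variable {d : ℕ}

lemma aux_trace_cthm_self_nonneg (A : Matrix (Fin d) (Fin d) ℝ) :
    0 ≤ (Aᴴ * A).trace := by
  rw [Matrix.trace]
  refine Finset.sum_nonneg fun i _ => ?_
  rw [Matrix.diag_apply, Matrix.mul_apply]
  exact Finset.sum_nonneg fun j _ => by
    simp only [Matrix.conjTranspose_apply, star_trivial]
    exact mul_self_nonneg _

lemma aux_trace_mul_nonneg {T M : Matrix (Fin d) (Fin d) ℝ}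
    (hT : T.PosSemidef) (hM : M.PosSemidef) : 0 ≤ (T * M).trace := by
  obtain ⟨C, rfl⟩ := posSemidef_iff_eq_transpose_mul_self' hT
  obtain ⟨D, rfl⟩ := posSemidef_iff_eq_transpose_mul_self' hM
  have h1 : Cᴴ * C * (Dᴴ * D) = (Cᴴ * C * Dᴴ) * D := by
    simp only [Matrix.mul_assoc]
  rw [h1, Matrix.trace_mul_comm]
  have h2 : D * (Cᴴ * C * Dᴴ) = (C * Dᴴ)ᴴ * (C * Dᴴ) := by
    simp only [Matrix.conjTranspose_mul, Matrix.conjTranspose_conjTranspose, Matrix.mul_assoc]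
  rw [h2]
  exact aux_trace_cthm_self_nonneg _

lemma aux_dot_eq_inner (x y : Fin d → ℝ) :
    x ⬝ᵥ y = ⟪(WithLp.equiv 2 (Fin d → ℝ)).symm x, (WithLp.equiv 2 (Fin d → ℝ)).symm y⟫_ℝ := by
  rw [EuclideanSpace.inner_toLp_toLp, star_trivial, dotProduct_comm]
  rfl

lemma aux_dot_self_eq (x : Fin d → ℝ) :
    x ⬝ᵥ x = ‖(WithLp.equiv 2 (Fin d → ℝ)).symm x‖ ^ 2 := by
  rw [aux_dot_eq_inner, real_inner_self_eq_norm_sq]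

lemma aux_quad_bound {E : Matrix (Fin d) (Fin d) ℝ} {c : ℝ}
    (hE : ‖E‖ ≤ c) (x : Fin d → ℝ) :
    |x ⬝ᵥ (E *ᵥ x)| ≤ c * (x ⬝ᵥ x) := by
  set x' := (WithLp.equiv 2 (Fin d → ℝ)).symm x with hx'
  have h1 : |x ⬝ᵥ (E *ᵥ x)| ≤ ‖x'‖ * ‖(WithLp.equiv 2 (Fin d → ℝ)).symm (E *ᵥ x)‖ := by
    rw [aux_dot_eq_inner]
    exact abs_real_inner_le_norm _ _
  have h2 : ‖(WithLp.equiv 2 (Fin d → ℝ)).symm (E *ᵥ x)‖ ≤ ‖E‖ * ‖x'‖ :=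
    E.l2_opNorm_mulVec x'
  have hc : 0 ≤ c := le_trans (norm_nonneg E) hE
  have h3 : ‖(WithLp.equiv 2 (Fin d → ℝ)).symm (E *ᵥ x)‖ ≤ c * ‖x'‖ :=
    h2.trans (mul_le_mul_of_nonneg_right hE (norm_nonneg x'))
  calc |x ⬝ᵥ (E *ᵥ x)| ≤ ‖x'‖ * ‖(WithLp.equiv 2 (Fin d → ℝ)).symm (E *ᵥ x)‖ := h1
    _ ≤ ‖x'‖ * (c * ‖x'‖) := mul_le_mul_of_nonneg_left h3 (norm_nonneg x')
    _ = c * (x ⬝ᵥ x) := by rw [aux_dot_self_eq]; ring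

lemma aux_inv_upper {B : Matrix (Fin d) (Fin d) ℝ} (hB : B.PosDef)
    (hlow : ∀ x : Fin d → ℝ, (1/2) * (x ⬝ᵥ x) ≤ x ⬝ᵥ (B *ᵥ x)) (x : Fin d → ℝ) :
    x ⬝ᵥ (B⁻¹ *ᵥ x) ≤ 2 * (x ⬝ᵥ x) := by
  have hdet : IsUnit B.det := (Matrix.isUnit_iff_isUnit_det B).mp hB.isUnit
  set y := B⁻¹ *ᵥ x with hy
  have hx : B *ᵥ y = x := by
    rw [hy, Matrix.mulVec_mulVec, Matrix.mul_nonsing_inv _ hdet, Matrix.one_mulVec]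
  have ht1 : x ⬝ᵥ y = y ⬝ᵥ (B *ᵥ y) := by rw [← hx, dotProduct_comm]
  have ht2 : (1/2) * (y ⬝ᵥ y) ≤ x ⬝ᵥ y := ht1 ▸ hlow y
  have hcs : x ⬝ᵥ y ≤ ‖(WithLp.equiv 2 (Fin d → ℝ)).symm x‖ *
      ‖(WithLp.equiv 2 (Fin d → ℝ)).symm y‖ := by
    rw [aux_dot_eq_inner]; exact real_inner_le_norm _ _
  set nx := ‖(WithLp.equiv 2 (Fin d → ℝ)).symm x‖ with hnx
  set ny := ‖(WithLp.equiv 2 (Fin d → ℝ)).symm y‖ with hny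
  have hyy : y ⬝ᵥ y = ny ^ 2 := aux_dot_self_eq y
  have hxx : x ⬝ᵥ x = nx ^ 2 := aux_dot_self_eq x
  have h1 : (1/2) * ny ^ 2 ≤ nx * ny := by rw [← hyy]; exact le_trans ht2 hcs
  have hnyn : 0 ≤ ny := norm_nonneg _
  have hnxn : 0 ≤ nx := norm_nonneg _
  have h2 : ny ≤ 2 * nx := by nlinarith
  calc x ⬝ᵥ y ≤ nx * ny := hcs
    _ ≤ nx * (2 * nx) := mul_le_mul_of_nonneg_left h2 hnxn
    _ = 2 * (x ⬝ᵥ x) := by rw [hxx]; ring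

end Aux

/-- Stability of the degrees-of-freedom surrogate: if
`‖(S+λI)^{-1/2}(Ŝ−S)(S+λI)^{-1/2}‖ ≤ 1/2` then
`|tr(S(Ŝ+λI)⁻¹) − df_λ(S)| ≤ 3·df_λ(S)`. -/
theorem df_surrogate_bound {d : ℕ}
    (S Shat : Matrix (Fin d) (Fin d) ℝ) (l : ℝ)
    (hS : S.PosSemidef) (hShat : Shat.IsHermitian) (hl : 0 < l)
    (herr : ‖minvSqrt (S + l • 1) * (Shat - S) * minvSqrt (S + l • 1)‖ ≤ 1 / 2) :
    |(S * (Shat + l • 1)⁻¹).trace - df S l| ≤ 3 * df S l := by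
  classical
  set A := S + l • (1 : Matrix (Fin d) (Fin d) ℝ) with hAdef
  have hl1 : (l • (1 : Matrix (Fin d) (Fin d) ℝ)).PosDef := by
    refine Matrix.PosDef.of_dotProduct_mulVec_pos ?_ (fun x hx => ?_)
    · show (l • (1 : Matrix (Fin d) (Fin d) ℝ))ᴴ = _
      simp [Matrix.conjTranspose_smul]
    · have hxx : (0:ℝ) < dotProduct (star x) x := dotProduct_star_self_pos_iff.mpr hx
      have : dotProduct (star x) ((l • (1 : Matrix (Fin d) (Fin d) ℝ)) *ᵥ x)
          = l * dotProduct (star x) x := by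
        rw [Matrix.smul_mulVec, Matrix.one_mulVec, dotProduct_smul, smul_eq_mul]
      rw [this]
      exact mul_pos hl hxx
  have hA : A.PosDef := Matrix.PosDef.posSemidef_add hS hl1
  have hAps : A.PosSemidef := hA.posSemidef
  set R := msqrt A with hRdef
  have hRps : R.PosSemidef := msqrt_posSemidef hAps
  have hRR : R * R = A := msqrt_mul_self hAps
  have hRdetunit : IsUnit R.det := by
    have hdd : R.det * R.det = A.det := by rw [← Matrix.det_mul, hRR]
    have hApos : (0:ℝ) < A.det := hA.det_pos
    have hne : R.det ≠ 0 := by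
      intro h
      rw [h, mul_zero] at hdd
      exact absurd hdd.symm (ne_of_gt hApos)
    exact isUnit_iff_ne_zero.mpr hne
  set N := R⁻¹ with hNdef
  have hRN : R * N = 1 := Matrix.mul_nonsing_inv _ hRdetunit
  have hNR : N * R = 1 := Matrix.nonsing_inv_mul _ hRdetunit
  have hNh : N.IsHermitian := hRps.isHermitian.inv
  set M0 := Shat - S with hM0def
  set E := N * M0 * N with hEdef
  have hM0h : M0.IsHermitian := hShat.sub hS.isHermitian
  have hminv : minvSqrt A = N := by
    show (msqrt A)⁻¹ = N
    rw [← hRdef, ← hNdef]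
  have hEnorm : ‖E‖ ≤ 1/2 := by
    rw [hminv] at herr
    rw [hEdef]
    exact herr
  have hEh : E.IsHermitian := by
    show Eᴴ = E
    rw [hEdef]
    simp only [Matrix.conjTranspose_mul, hNh.eq, hM0h.eq, Matrix.mul_assoc]
  set B := 1 + E with hBdef
  have hquad : ∀ x : Fin d → ℝ, (1/2) * (x ⬝ᵥ x) ≤ x ⬝ᵥ (B *ᵥ x) := by
    intro x
    have h := aux_quad_bound hEnorm x
    have hBx : x ⬝ᵥ (B *ᵥ x) = x ⬝ᵥ x + x ⬝ᵥ (E *ᵥ x) := by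
      rw [hBdef, Matrix.add_mulVec, Matrix.one_mulVec, dotProduct_add]
    rw [hBx]
    have h' := abs_le.mp h
    linarith [h'.1]
  have hBpd : B.PosDef := by
    refine Matrix.PosDef.of_dotProduct_mulVec_pos (Matrix.isHermitian_one.add hEh) (fun x hx => ?_)
    have hxx : (0:ℝ) < dotProduct (star x) x := dotProduct_star_self_pos_iff.mpr hx
    rw [star_trivial] at hxx ⊢
    have := hquad x
    linarith
  have hBinv : B⁻¹.PosDef := hBpd.inv
  have hfact : Shat + l • 1 = R * B * R := by
    have h2 : R * E * R = M0 := by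
      rw [hEdef]
      calc R * (N * M0 * N) * R = (R * N) * (M0 * (N * R)) := by
            simp only [Matrix.mul_assoc]
        _ = M0 := by rw [hRN, hNR, Matrix.one_mul, Matrix.mul_one]
    calc Shat + l • 1 = A + M0 := by rw [hAdef, hM0def]; abel
      _ = R * R + R * E * R := by rw [hRR, h2]
      _ = R * B * R := by rw [hBdef, Matrix.mul_add, Matrix.mul_one, Matrix.add_mul]
  have hinv : (Shat + l • 1)⁻¹ = N * (B⁻¹ * N) := by
    rw [hfact, Matrix.mul_inv_rev, Matrix.mul_inv_rev, ← hNdef]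
  set T := N * S * N with hTdef
  have hT : T.PosSemidef := by
    have h := hS.mul_mul_conjTranspose_same N
    rwa [hNh.eq] at h
  have htr1 : (S * (Shat + l • 1)⁻¹).trace = (T * B⁻¹).trace := by
    rw [hinv]
    have hassoc : S * (N * (B⁻¹ * N)) = (S * N * B⁻¹) * N := by
      simp only [Matrix.mul_assoc]
    rw [hassoc, Matrix.trace_mul_comm]
    congr 1
    rw [hTdef]
    simp only [Matrix.mul_assoc]
  have hAinv : A⁻¹ = N * N := by
    rw [← hRR, Matrix.mul_inv_rev, ← hNdef]
  have htr2 : df S l = T.trace := by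
    have hdf : df S l = (S * A⁻¹).trace := rfl
    rw [hdf, hAinv]
    have hassoc : S * (N * N) = (S * N) * N := by simp only [Matrix.mul_assoc]
    rw [hassoc, Matrix.trace_mul_comm, hTdef]
    congr 1
    simp only [Matrix.mul_assoc]
  have hpos1 : 0 ≤ (T * B⁻¹).trace := aux_trace_mul_nonneg hT hBinv.posSemidef
  have hposT : 0 ≤ T.trace := by
    have := aux_trace_mul_nonneg hT (Matrix.PosSemidef.one)
    rwa [Matrix.mul_one] at this
  have hkey : ((2:ℝ) • (1 : Matrix (Fin d) (Fin d) ℝ) - B⁻¹).PosSemidef := by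
    refine Matrix.posSemidef_iff_dotProduct_mulVec.mpr ⟨?_, fun x => ?_⟩
    · have h1 : ((2:ℝ) • (1 : Matrix (Fin d) (Fin d) ℝ)).IsHermitian := by
        show _ᴴ = _
        rw [Matrix.conjTranspose_smul, star_trivial, Matrix.isHermitian_one.eq]
      exact h1.sub hBinv.isHermitian
    · rw [star_trivial, Matrix.sub_mulVec, dotProduct_sub,
        Matrix.smul_mulVec, Matrix.one_mulVec, dotProduct_smul, smul_eq_mul]
      have := aux_inv_upper hBpd hquad x
      linarith
  have hupper : (T * B⁻¹).trace ≤ 2 * T.trace := by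
    have h0 := aux_trace_mul_nonneg hT hkey
    have hexp : T * ((2:ℝ) • (1 : Matrix (Fin d) (Fin d) ℝ) - B⁻¹)
        = (2:ℝ) • T - T * B⁻¹ := by
      rw [Matrix.mul_sub, Matrix.mul_smul, Matrix.mul_one]
    rw [hexp, Matrix.trace_sub, Matrix.trace_smul, smul_eq_mul] at h0
    linarith
  rw [htr1, htr2, abs_le]
  constructor <;> linarith
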